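/- If F is the set of transient states of a finite Markov chain and Z is the submatrix of the transition matrix restricted to transitions within F, then the matrix I − Z is invertible, and the (f,f') entry of (I−Z)^{-1} equals the expected total number of visits to f' starting from f. -/

import Mathlib

set_option linter.unusedSectionVars false

open Finset Matrix

/-- The probability, starting from `s`, of eventually returning to `s`. -/
noncomputable def returnProb {S : Type*} [Fintype S] [DecidableEq S]
    (T : Matrix S S ℝ) (s : S) : ℝ :=
  ∑' n : ℕ, (T * (Matrix.of fun a b => if a = s then 0 else T a b) ^ n) s s

/-- A state is recurrent if the probability of eventually returning to it is one;
otherwise it is transient. -/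
def Recurrent {S : Type*} [Fintype S] [DecidableEq S]
    (T : Matrix S S ℝ) (s : S) : Prop :=
  returnProb T s = 1


namespace MarkovAux

variable {S : Type*} [Fintype S] [DecidableEq S]

lemma shift_pow {R : Type*} [Monoid R] (a b : R) (n : ℕ) :
    a * (b * a) ^ n = (a * b) ^ n * a := by
  induction n with
  | zero => simp
  | succ n ih =>
      rw [pow_succ, ← mul_assoc, ih, pow_succ]
      rw [mul_assoc, mul_assoc, ← mul_assoc a b a, ← mul_assoc]

lemma mul_entry_nonneg {A B : Matrix S S ℝ} (hA : ∀ a b, 0 ≤ A a b)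
    (hB : ∀ a b, 0 ≤ B a b) : ∀ a b, 0 ≤ (A * B) a b := by
  intro a b
  rw [Matrix.mul_apply]
  exact Finset.sum_nonneg fun c _ => mul_nonneg (hA a c) (hB c b)

lemma pow_entry_nonneg {A : Matrix S S ℝ} (hA : ∀ a b, 0 ≤ A a b) (n : ℕ) :
    ∀ a b, 0 ≤ (A ^ n) a b := by
  induction n with
  | zero => intro a b; rw [pow_zero, Matrix.one_apply]; split <;> norm_num
  | succ n ih => rw [pow_succ]; exact mul_entry_nonneg ih hA

/-- For nonnegative sequences, the "Cauchy-product style" partial double sum is at most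
the product of the partial sums. -/
lemma cauchy_bound (c u : ℕ → ℝ) (hc : ∀ n, 0 ≤ c n) (hu : ∀ n, 0 ≤ u n) (M : ℕ) :
    ∑ m ∈ Finset.range M, ∑ n ∈ Finset.range (m + 1), c n * u (m - n)
      ≤ (∑ n ∈ Finset.range M, c n) * (∑ k ∈ Finset.range M, u k) := by
  rw [Finset.sum_mul_sum, ← Finset.sum_product']
  have key : ∑ m ∈ Finset.range M, ∑ n ∈ Finset.range (m + 1), c n * u (m - n)
      = ∑ p ∈ (Finset.range M ×ˢ Finset.range M).filter (fun p => p.1 + p.2 < M),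
          c p.1 * u p.2 := by
    rw [Finset.sum_sigma']
    refine Finset.sum_nbij' (fun p => (p.2, p.1 - p.2)) (fun p => ⟨p.1 + p.2, p.1⟩)
      ?_ ?_ ?_ ?_ ?_
    · rintro ⟨m, n⟩ hmn
      simp only [Finset.mem_sigma, Finset.mem_range] at hmn
      simp only [Finset.mem_filter, Finset.mem_product, Finset.mem_range]
      omega
    · rintro ⟨n, k⟩ hnk
      simp only [Finset.mem_filter, Finset.mem_product, Finset.mem_range] at hnk
      simp only [Finset.mem_sigma, Finset.mem_range]
      omega
    · rintro ⟨m, n⟩ hmn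
      simp only [Finset.mem_sigma, Finset.mem_range] at hmn
      have h2 : n + (m - n) = m := by omega
      simp [h2]
    · rintro ⟨n, k⟩ hnk
      simp only [Finset.mem_filter, Finset.mem_product, Finset.mem_range] at hnk
      simp
    · rintro ⟨m, n⟩ hmn; rfl
  rw [key]
  refine Finset.sum_le_sum_of_subset_of_nonneg (Finset.filter_subset _ _) ?_
  intro p _ _
  exact mul_nonneg (hc _) (hu _)


variable (T : Matrix S S ℝ) (s : S)

/-- Transition matrix with column `s` zeroed out. -/
noncomputable def Qc : Matrix S S ℝ := Matrix.of fun a b => if b = s then 0 else T a b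

/-- The "step into `s`" part of the transition matrix. -/
noncomputable def Ec : Matrix S S ℝ := Matrix.of fun a b => if b = s then T a s else 0

lemma Qc_nonneg (h : ∀ a b, 0 ≤ T a b) : ∀ a b, 0 ≤ Qc T s a b := by
  intro a b; simp only [Qc, Matrix.of_apply]; split
  · exact le_rfl
  · exact h a b

lemma T_eq_Qc_add_Ec : T = Qc T s + Ec T s := by
  ext a b
  simp only [Matrix.add_apply, Qc, Ec, Matrix.of_apply]
  split
  · rename_i h; subst h; simp
  · simp

lemma Qc_row_sum (hrow : ∀ a, ∑ b, T a b = 1) (a : S) :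
    ∑ b, Qc T s a b = 1 - T a s := by
  have h : ∑ b, Qc T s a b = (∑ b, T a b) - ∑ b, (if b = s then T a b else 0) := by
    rw [← Finset.sum_sub_distrib]
    refine Finset.sum_congr rfl fun b _ => ?_
    simp only [Qc, Matrix.of_apply]
    split
    · ring
    · ring
  rw [h, hrow, Finset.sum_ite_eq' Finset.univ s (fun b => T a b)]
  simp

lemma Qc_pow_col (n : ℕ) (hn : 1 ≤ n) (x : S) : (Qc T s ^ n) x s = 0 := by
  obtain ⟨k, rfl⟩ : ∃ k, n = k + 1 := ⟨n - 1, by omega⟩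
  rw [pow_succ, Matrix.mul_apply]
  refine Finset.sum_eq_zero fun z _ => ?_
  simp [Qc]

lemma first_visit_sum_le (hnonneg : ∀ a b, 0 ≤ T a b) (hrow : ∀ a, ∑ b, T a b = 1)
    (x : S) (N : ℕ) :
    ∑ n ∈ Finset.range N, (Qc T s ^ n * T) x s ≤ 1 := by
  set Q := Qc T s with hQ
  have hB : ∀ n : ℕ, (Q ^ n * T) x s
      = (∑ y, (Q ^ n) x y) - ∑ y, (Q ^ (n + 1)) x y := by
    intro n
    have h : ∑ y, (Q ^ (n + 1)) x y = (∑ y, (Q ^ n) x y) - (Q ^ n * T) x s := by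
      calc ∑ y, (Q ^ (n + 1)) x y
          = ∑ y, ∑ z, (Q ^ n) x z * Q z y := by
            simp only [pow_succ, Matrix.mul_apply]
        _ = ∑ z, (Q ^ n) x z * ∑ y, Q z y := by
            rw [Finset.sum_comm]
            simp [Finset.mul_sum]
        _ = ∑ z, ((Q ^ n) x z - (Q ^ n) x z * T z s) := by
            refine Finset.sum_congr rfl fun z _ => ?_
            rw [Qc_row_sum T s hrow]; ring
        _ = (∑ z, (Q ^ n) x z) - (Q ^ n * T) x s := by
            rw [Finset.sum_sub_distrib, Matrix.mul_apply]
    rw [h]; ring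
  have htel : ∑ n ∈ Finset.range N, (Q ^ n * T) x s
      = (∑ y, (Q ^ 0) x y) - ∑ y, (Q ^ N) x y := by
    rw [Finset.sum_congr rfl fun n _ => hB n]
    exact Finset.sum_range_sub' (fun n => ∑ y, (Q ^ n) x y) N
  have h0 : ∑ y, ((Q : Matrix S S ℝ) ^ 0) x y = 1 := by
    simp [Matrix.one_apply]
  have hN : 0 ≤ ∑ y, (Q ^ N) x y :=
    Finset.sum_nonneg fun y _ => pow_entry_nonneg (Qc_nonneg T s hnonneg) N x y
  rw [htel, h0]
  linarith

lemma T_mul_Qr_pow (n : ℕ) :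
    T * (Matrix.of fun a b => if a = s then 0 else T a b) ^ n = Qc T s ^ n * T := by
  have h : T * (Matrix.of fun a b => if a = s then 0 else T a b) = Qc T s * T := by
    ext a b
    simp only [Matrix.mul_apply, Qc, Matrix.of_apply]
    refine Finset.sum_congr rfl fun c _ => ?_
    by_cases h : c = s <;> simp [h]
  induction n with
  | zero => simp
  | succ n ih =>
      rw [pow_succ', ← mul_assoc, h, mul_assoc, ih, ← mul_assoc, ← pow_succ']

lemma returnProb_eq : returnProb T s = ∑' n, (Qc T s ^ n * T) s s := by
  unfold returnProb
  exact tsum_congr fun n => by rw [T_mul_Qr_pow]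

lemma T_pow_decomp (m : ℕ) :
    T ^ m = Qc T s ^ m
      + ∑ n ∈ Finset.range m, Qc T s ^ n * Ec T s * T ^ (m - 1 - n) := by
  induction m with
  | zero => simp
  | succ m ih =>
      have h1 : T ^ (m + 1) = Qc T s * T ^ m + Ec T s * T ^ m := by
        rw [pow_succ']
        nth_rewrite 1 [T_eq_Qc_add_Ec T s]
        rw [add_mul]
      have h2 : ∀ n ∈ Finset.range m,
          Qc T s * (Qc T s ^ n * Ec T s * T ^ (m - 1 - n))
            = Qc T s ^ (n + 1) * Ec T s * T ^ (m - (n + 1)) := by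
        intro n hn
        simp only [Finset.mem_range] at hn
        have h3 : m - (n + 1) = m - 1 - n := by omega
        rw [h3, ← mul_assoc, ← mul_assoc, ← pow_succ']
      rw [h1, ih, mul_add, Finset.mul_sum, ← pow_succ']
      rw [Finset.sum_congr rfl h2]
      have h4 : ∑ n ∈ Finset.range (m + 1), Qc T s ^ n * Ec T s * T ^ (m + 1 - 1 - n)
          = (∑ n ∈ Finset.range m, Qc T s ^ (n + 1) * Ec T s * T ^ (m - (n + 1)))
            + Qc T s ^ 0 * Ec T s * T ^ (m + 1 - 1 - 0) := by
        exact Finset.sum_range_succ' (fun n => Qc T s ^ n * Ec T s * T ^ (m + 1 - 1 - n)) m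
      rw [h4]
      simp only [pow_zero, one_mul, Nat.add_sub_cancel, Nat.sub_zero]
      rw [← ih]
      abel

lemma mid_entry (M N : Matrix S S ℝ) (x : S) :
    (M * Ec T s * N) x s = (M * T) x s * N s s := by
  have h1 : ∀ y, (M * Ec T s) x y = if y = s then (M * T) x s else 0 := by
    intro y
    simp only [Matrix.mul_apply, Ec, Matrix.of_apply]
    by_cases h : y = s
    · simp [h]
    · simp [h]
  rw [Matrix.mul_apply]
  calc ∑ y, (M * Ec T s) x y * N y s
      = ∑ y, (if y = s then (M * T) x s * N y s else 0) := by
        refine Finset.sum_congr rfl fun y _ => ?_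
        rw [h1]
        split <;> simp
    _ = (M * T) x s * N s s := by
        rw [Finset.sum_ite_eq' Finset.univ s (fun y => (M * T) x s * N y s)]
        simp

lemma entry_decomp (m : ℕ) (x : S) :
    (T ^ m) x s = (Qc T s ^ m) x s
      + ∑ n ∈ Finset.range m, (Qc T s ^ n * T) x s * (T ^ (m - 1 - n)) s s := by
  have h := congrFun (congrFun (T_pow_decomp T s m) x) s
  rw [Matrix.add_apply, Matrix.sum_apply] at h
  rw [h]
  congr 1
  exact Finset.sum_congr rfl fun n _ => mid_entry T s _ _ x

lemma col_bound (hnonneg : ∀ a b, 0 ≤ T a b) (hrow : ∀ a, ∑ b, T a b = 1)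
    (hs : returnProb T s ≠ 1) :
    ∃ C : ℝ, ∀ x M, ∑ m ∈ Finset.range M, (T ^ m) x s ≤ C := by
  set Q := Qc T s with hQdef
  have hQn : ∀ a b, 0 ≤ Q a b := Qc_nonneg T s hnonneg
  have hc_nonneg : ∀ x n, 0 ≤ (Q ^ n * T) x s := fun x n =>
    mul_entry_nonneg (pow_entry_nonneg hQn n) hnonneg x s
  have hu_nonneg : ∀ m, ∀ x, 0 ≤ (T ^ m) x s := fun m x =>
    pow_entry_nonneg hnonneg m x s
  have hc_sum : Summable fun n => (Q ^ n * T) s s :=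
    summable_of_sum_range_le (fun n => hc_nonneg s n)
      (fun N => first_visit_sum_le T s hnonneg hrow s N)
  set r := ∑' n, (Q ^ n * T) s s with hrdef
  have hr_le : r ≤ 1 :=
    Real.tsum_le_of_sum_range_le (fun n => hc_nonneg s n)
      (fun N => first_visit_sum_le T s hnonneg hrow s N)
  have hr_ne : r ≠ 1 := by rw [hrdef, ← returnProb_eq]; exact hs
  have hr_lt : r < 1 := lt_of_le_of_ne hr_le hr_ne
  have hr0 : 0 ≤ r := tsum_nonneg fun n => hc_nonneg s n
  have hpos : (0:ℝ) < 1 - r := by linarith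
  have hterm : ∀ x m, ((T : Matrix S S ℝ) ^ (m + 1)) x s
      = ∑ n ∈ Finset.range (m + 1), (Q ^ n * T) x s * (T ^ (m - n)) s s := by
    intro x m
    have h := entry_decomp T s (m + 1) x
    rw [Qc_pow_col T s (m + 1) (by omega) x, zero_add] at h
    simpa using h
  have hU : ∀ M, ∑ m ∈ Finset.range M, (T ^ m) s s ≤ 1 / (1 - r) := by
    intro M
    have key : ∑ m ∈ Finset.range M, (T ^ m) s s
        ≤ 1 + r * ∑ m ∈ Finset.range M, (T ^ m) s s := by
      cases M with
      | zero => simp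
      | succ M =>
          have hsplit : ∑ m ∈ Finset.range (M + 1), (T ^ m) s s
              = ∑ m ∈ Finset.range M, (T ^ (m + 1)) s s + (T ^ 0 : Matrix S S ℝ) s s :=
            Finset.sum_range_succ' (fun m => (T ^ m) s s) M
          have h0 : ((T:Matrix S S ℝ) ^ 0) s s = 1 := by simp [Matrix.one_apply]
          have hcs : ∑ n ∈ Finset.range M, (Q ^ n * T) s s ≤ r :=
            Summable.sum_le_tsum (Finset.range M) (fun n _ => hc_nonneg s n) hc_sum
          have humono : ∑ k ∈ Finset.range M, (T ^ k) s s
              ≤ ∑ k ∈ Finset.range (M + 1), (T ^ k) s s := by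
            refine Finset.sum_le_sum_of_subset_of_nonneg
              (Finset.range_subset_range.2 (by omega)) fun k _ _ => hu_nonneg k s
          have hsum_nonneg : 0 ≤ ∑ k ∈ Finset.range M, (T ^ k) s s :=
            Finset.sum_nonneg fun k _ => hu_nonneg k s
          calc ∑ m ∈ Finset.range (M + 1), (T ^ m) s s
              = ∑ m ∈ Finset.range M, (T ^ (m + 1)) s s
                  + (T ^ 0 : Matrix S S ℝ) s s := hsplit
            _ = ∑ m ∈ Finset.range M, ∑ n ∈ Finset.range (m + 1),
                  (Q ^ n * T) s s * (T ^ (m - n)) s s + 1 := by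
                rw [h0, Finset.sum_congr rfl fun m _ => hterm s m]
            _ ≤ (∑ n ∈ Finset.range M, (Q ^ n * T) s s)
                  * (∑ k ∈ Finset.range M, (T ^ k) s s) + 1 := by
                have := cauchy_bound (fun n => (Q ^ n * T) s s)
                  (fun k => (T ^ k) s s) (fun n => hc_nonneg s n)
                  (fun k => hu_nonneg k s) M
                linarith
            _ ≤ r * ∑ m ∈ Finset.range (M + 1), (T ^ m) s s + 1 := by
                have := mul_le_mul hcs humono hsum_nonneg hr0
                linarith
            _ = 1 + r * ∑ m ∈ Finset.range (M + 1), (T ^ m) s s := by ring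
    rw [le_div_iff₀ hpos]
    nlinarith [key]
  refine ⟨1 / (1 - r) + 1, fun x M => ?_⟩
  cases M with
  | zero =>
      simp only [Finset.range_zero, Finset.sum_empty]
      positivity
  | succ M =>
      have hsplit : ∑ m ∈ Finset.range (M + 1), (T ^ m) x s
          = ∑ m ∈ Finset.range M, (T ^ (m + 1)) x s + (T ^ 0 : Matrix S S ℝ) x s :=
        Finset.sum_range_succ' (fun m => (T ^ m) x s) M
      have hx0 : ((T:Matrix S S ℝ) ^ 0) x s ≤ 1 := by
        rw [pow_zero, Matrix.one_apply]
        split <;> norm_num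
      have hcx : ∑ n ∈ Finset.range M, (Q ^ n * T) x s ≤ 1 :=
        first_visit_sum_le T s hnonneg hrow x M
      have hcx0 : 0 ≤ ∑ n ∈ Finset.range M, (Q ^ n * T) x s :=
        Finset.sum_nonneg fun n _ => hc_nonneg x n
      have hsum_nonneg : 0 ≤ ∑ k ∈ Finset.range M, (T ^ k) s s :=
        Finset.sum_nonneg fun k _ => hu_nonneg k s
      calc ∑ m ∈ Finset.range (M + 1), (T ^ m) x s
          = ∑ m ∈ Finset.range M, (T ^ (m + 1)) x s
              + (T ^ 0 : Matrix S S ℝ) x s := hsplit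
        _ ≤ ∑ m ∈ Finset.range M, ∑ n ∈ Finset.range (m + 1),
              (Q ^ n * T) x s * (T ^ (m - n)) s s + 1 := by
            rw [Finset.sum_congr rfl fun m _ => hterm x m]
            linarith
        _ ≤ (∑ n ∈ Finset.range M, (Q ^ n * T) x s)
              * (∑ k ∈ Finset.range M, (T ^ k) s s) + 1 := by
            have := cauchy_bound (fun n => (Q ^ n * T) x s)
              (fun k => (T ^ k) s s) (fun n => hc_nonneg x n)
              (fun k => hu_nonneg k s) M
            linarith
        _ ≤ 1 / (1 - r) + 1 := by
            have h1 := hU M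
            nlinarith

lemma col_summable (hnonneg : ∀ a b, 0 ≤ T a b) (hrow : ∀ a, ∑ b, T a b = 1)
    (hs : returnProb T s ≠ 1) (x : S) :
    Summable fun m => (T ^ m) x s := by
  obtain ⟨C, hC⟩ := col_bound T s hnonneg hrow hs
  exact summable_of_sum_range_le (fun m => pow_entry_nonneg hnonneg m x s)
    (fun N => hC x N)

end MarkovAux


/-- If `F` is the set of transient states of a finite Markov chain and
`Z = T|_{F×F}`, then `I − Z` is invertible and the `(f,f')` entry of `(I−Z)⁻¹` equals
the expected total number of visits to `f'` starting from `f`, i.e. `∑_t (Z^t)(f,f')`. -/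
theorem fundamental_matrix_of_transient_states {S : Type*} [Fintype S] [DecidableEq S]
    (T : Matrix S S ℝ)
    (hnonneg : ∀ s s', 0 ≤ T s s') (hrow : ∀ s, ∑ s', T s s' = 1)
    (F : Finset S) (hF : ∀ s, s ∈ F ↔ ¬ Recurrent T s)
    (Z : Matrix F F ℝ) (hZ : ∀ f f' : F, Z f f' = T f f') :
    IsUnit (1 - Z) ∧
      ∀ f f' : F, (1 - Z)⁻¹ f f' = ∑' t : ℕ, ((Z ^ t) f f') := by
  classical
  have hcol : ∀ (f' : F) (x : S), Summable fun t => (T ^ t) x ↑f' := fun f' x =>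
    MarkovAux.col_summable T ↑f' hnonneg hrow ((hF ↑f').mp f'.2) x
  have hZnn : ∀ f f' : F, 0 ≤ Z f f' := fun f f' => (hZ f f') ▸ hnonneg ↑f ↑f'
  have hZpow_nn : ∀ (t : ℕ) (f f' : F), 0 ≤ (Z ^ t) f f' := fun t =>
    MarkovAux.pow_entry_nonneg hZnn t
  have hZle : ∀ (t : ℕ) (f f' : F), (Z ^ t) f f' ≤ (T ^ t) ↑f ↑f' := by
    intro t
    induction t with
    | zero =>
        intro f f'
        rw [pow_zero, pow_zero, Matrix.one_apply, Matrix.one_apply]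
        by_cases h : f = f'
        · simp [h]
        · have h2 : (↑f : S) ≠ ↑f' := fun hc => h (Subtype.ext hc)
          simp [h, h2]
    | succ t ih =>
        intro f f'
        rw [pow_succ, pow_succ, Matrix.mul_apply, Matrix.mul_apply]
        calc ∑ g : F, (Z ^ t) f g * Z g f'
            ≤ ∑ g : F, (T ^ t) ↑f ↑g * T ↑g ↑f' := by
              refine Finset.sum_le_sum fun g _ => ?_
              exact mul_le_mul (ih f g) (le_of_eq (hZ g f')) (hZnn g f')
                (MarkovAux.pow_entry_nonneg hnonneg t ↑f ↑g)
          _ = ∑ g ∈ F, (T ^ t) ↑f g * T g ↑f' :=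
              Finset.sum_coe_sort F (fun g => (T ^ t) ↑f g * T g ↑f')
          _ ≤ ∑ g : S, (T ^ t) ↑f g * T g ↑f' := by
              refine Finset.sum_le_sum_of_subset_of_nonneg (Finset.subset_univ F)
                fun g _ _ => ?_
              exact mul_nonneg (MarkovAux.pow_entry_nonneg hnonneg t _ _) (hnonneg _ _)
  have hZsum : ∀ f f' : F, Summable fun t => (Z ^ t) f f' := fun f f' =>
    Summable.of_nonneg_of_le (fun t => hZpow_nn t f f') (fun t => hZle t f f')
      (hcol f' ↑f)
  set N : Matrix F F ℝ := Matrix.of fun f f' => ∑' t : ℕ, (Z ^ t) f f' with hNdef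
  have hNapp : ∀ f f' : F, N f f' = ∑' t : ℕ, (Z ^ t) f f' := fun f f' => rfl
  have hinv : (1 - Z) * N = 1 := by
    ext f f'
    rw [sub_mul, one_mul, Matrix.sub_apply]
    have hZN : (Z * N) f f' = ∑' t : ℕ, (Z ^ (t + 1)) f f' := by
      rw [Matrix.mul_apply]
      calc ∑ g : F, Z f g * N g f'
          = ∑ g : F, ∑' t : ℕ, Z f g * (Z ^ t) g f' := by
            refine Finset.sum_congr rfl fun g _ => ?_
            rw [hNapp, tsum_mul_left]
        _ = ∑' t : ℕ, ∑ g : F, Z f g * (Z ^ t) g f' :=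
            (Summable.tsum_finsetSum fun g _ => (hZsum g f').mul_left _).symm
        _ = ∑' t : ℕ, (Z ^ (t + 1)) f f' := by
            refine tsum_congr fun t => ?_
            rw [pow_succ', Matrix.mul_apply]
    rw [hZN, hNapp]
    have hshift : ∑' t : ℕ, (Z ^ t) f f'
        = (Z ^ 0) f f' + ∑' t : ℕ, (Z ^ (t + 1)) f f' := Summable.tsum_eq_zero_add (hZsum f f')
    rw [hshift, pow_zero]
    ring_nf
  constructor
  · exact IsUnit.of_mul_eq_one _ hinv
  · intro f f'
    rw [Matrix.inv_eq_right_inv hinv]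
    exact hNapp f f'
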